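/- Moyal's formula: for Schwartz functions f₁, f₂, g₁, g₂ on ℝᵈ, ⟨W(f₁,g₁), W(f₂,g₂)⟩_{L²(ℝ^{2d})} = ⟨f₁, f₂⟩ · conj(⟨g₁, g₂⟩). In particular ‖W f‖_{L²(ℝ^{2d})} = ‖f‖²_{L²(ℝᵈ)}. -/

import Mathlib

open MeasureTheory Real

/-- The cross-Wigner distribution of `f` and `g` on ℝᵈ. -/
noncomputable def W (d : ℕ) (f g : EuclideanSpace ℝ (Fin d) → ℂ)
    (x ω : EuclideanSpace ℝ (Fin d)) : ℂ :=
  ∫ y : EuclideanSpace ℝ (Fin d),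
    Complex.exp (-2 * (π : ℂ) * Complex.I * ((inner ℝ ω y : ℝ) : ℂ)) *
      f (x + (1/2 : ℝ) • y) * (starRingEnd ℂ) (g (x - (1/2 : ℝ) • y))

namespace Moyal

open Complex FourierTransform SchwartzMap Convolution MeasureTheory

noncomputable section

variable {d : ℕ}

local notation "𝓔" => EuclideanSpace ℝ (Fin d)

/-- A Schwartz function has temperate growth. -/
lemma schwartz_temperate {E F : Type*} [NormedAddCommGroup E] [NormedSpace ℝ E]
    [NormedAddCommGroup F] [NormedSpace ℝ F] (f : 𝓢(E, F)) :
    Function.HasTemperateGrowth ⇑f :=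
  ⟨f.smooth ⊤, fun n => ⟨0, SchwartzMap.seminorm ℝ 0 n f, fun x => by
    simpa using f.norm_iteratedFDeriv_le_seminorm ℝ n x⟩⟩

lemma affine_temperate {E : Type*} [NormedAddCommGroup E] [NormedSpace ℝ E] (x₀ : E) (c : ℝ) :
    Function.HasTemperateGrowth (fun y : E => x₀ + c • y) := by
  have h1 : (fun y : E => x₀ + c • y)
      = fun y => x₀ + (c • ContinuousLinearMap.id ℝ E) y := rfl
  rw [h1]
  apply Function.HasTemperateGrowth.of_fderiv (k := 1) (C := ‖x₀‖ + |c|)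
  · have : fderiv ℝ (fun y : E => x₀ + (c • ContinuousLinearMap.id ℝ E) y)
        = fun _ => c • ContinuousLinearMap.id ℝ E := by
      funext y
      rw [fderiv_const_add, ContinuousLinearMap.fderiv]
    rw [this]
    exact .const _
  · exact (differentiable_const x₀).add (c • ContinuousLinearMap.id ℝ E).differentiable
  · intro x
    have h2 : ‖x₀ + (c • ContinuousLinearMap.id ℝ E) x‖ ≤ ‖x₀‖ + |c| * ‖x‖ := by
      refine (norm_add_le _ _).trans ?_
      have : ‖(c • ContinuousLinearMap.id ℝ E) x‖ = |c| * ‖x‖ := by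
        simp [norm_smul]
      rw [this]
    rw [pow_one]
    nlinarith [norm_nonneg x, abs_nonneg c, norm_nonneg x₀]

/-- Composition of a Schwartz function with an invertible affine map `y ↦ x₀ + c • y`. -/
def shift (f : 𝓢(𝓔, ℂ)) (x₀ : 𝓔) (c : ℝ) (hc : c ≠ 0) : 𝓢(𝓔, ℂ) :=
  SchwartzMap.compCLM ℝ (affine_temperate x₀ c)
    ⟨1, |c|⁻¹ * (1 + ‖x₀‖), fun y => by
      have h0 : 0 < |c| := abs_pos.2 hc
      have h1 : |c| * ‖y‖ ≤ (1 + ‖x₀‖) * (1 + ‖x₀ + c • y‖) := by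
        have h2 : ‖c • y‖ ≤ ‖x₀ + c • y‖ + ‖x₀‖ := by
          have h3 := norm_sub_le (x₀ + c • y) x₀
          simpa using h3
        rw [norm_smul, Real.norm_eq_abs] at h2
        nlinarith [norm_nonneg y, norm_nonneg x₀, norm_nonneg (x₀ + c • y)]
      rw [pow_one]
      calc ‖y‖ = |c|⁻¹ * (|c| * ‖y‖) := by field_simp
      _ ≤ |c|⁻¹ * ((1 + ‖x₀‖) * (1 + ‖x₀ + c • y‖)) := by
          exact mul_le_mul_of_nonneg_left h1 (by positivity)
      _ = |c|⁻¹ * (1 + ‖x₀‖) * (1 + ‖x₀ + c • y‖) := by ring⟩ f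

lemma shift_apply (f : 𝓢(𝓔, ℂ)) (x₀ : 𝓔) (c : ℝ) (hc : c ≠ 0) (y : 𝓔) :
    shift f x₀ c hc y = f (x₀ + c • y) := rfl

/-- The bilinear map `(a, b) ↦ a * conj b` as a real-bilinear continuous map. -/
def mulConjCLM : ℂ →L[ℝ] ℂ →L[ℝ] ℂ :=
  ((ContinuousLinearMap.mul ℝ ℂ).flip.comp
    (RCLike.conjCLE (K := ℂ)).toContinuousLinearMap).flip

lemma mulConjCLM_apply (a b : ℂ) : mulConjCLM a b = a * (starRingEnd ℂ) b := rfl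

/-- The bilinear map `(a, b) ↦ conj a * b` as a real-bilinear continuous map. -/
def conjMulCLM : ℂ →L[ℝ] ℂ →L[ℝ] ℂ :=
  (ContinuousLinearMap.mul ℝ ℂ).comp (RCLike.conjCLE (K := ℂ)).toContinuousLinearMap

lemma conjMulCLM_apply (a b : ℂ) : conjMulCLM a b = (starRingEnd ℂ) a * b := rfl

/-- Pointwise `f * conj g` of two Schwartz functions, as a Schwartz function. -/
def mulConjS (f g : 𝓢(𝓔, ℂ)) : 𝓢(𝓔, ℂ) :=
  SchwartzMap.bilinLeftCLM mulConjCLM (schwartz_temperate g) f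

lemma mulConjS_apply (f g : 𝓢(𝓔, ℂ)) (x : 𝓔) :
    mulConjS f g x = f x * (starRingEnd ℂ) (g x) := rfl

/-- Pointwise `conj f * g` of two Schwartz functions, as a Schwartz function. -/
def conjMulS (f g : 𝓢(𝓔, ℂ)) : 𝓢(𝓔, ℂ) :=
  SchwartzMap.bilinLeftCLM conjMulCLM (schwartz_temperate g) f

lemma conjMulS_apply (f g : 𝓢(𝓔, ℂ)) (x : 𝓔) :
    conjMulS f g x = (starRingEnd ℂ) (f x) * g x := rfl

/-- Complex conjugation of a Schwartz function. -/
def conjS (f : 𝓢(𝓔, ℂ)) : 𝓢(𝓔, ℂ) :=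
  SchwartzMap.bilinLeftCLM conjMulCLM (Function.HasTemperateGrowth.const (1 : ℂ)) f

lemma conjS_apply (f : 𝓢(𝓔, ℂ)) (x : 𝓔) :
    conjS f x = (starRingEnd ℂ) (f x) := mul_one _

/-- Parseval's identity for Schwartz functions. -/
lemma parseval (φ ψ : 𝓢(𝓔, ℂ)) :
    ∫ ω : 𝓔, 𝓕 ⇑φ ω * (starRingEnd ℂ) (𝓕 ⇑ψ ω) = ∫ v : 𝓔, φ v * (starRingEnd ℂ) (ψ v) := by
  set h : 𝓢(𝓔, ℂ) := (FourierTransform.fourierCLE ℝ 𝓢(𝓔, ℂ)).symm (conjS ψ) with hh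
  have hcoe : ⇑h = 𝓕⁻ ⇑(conjS ψ) := by
    rw [hh]; exact SchwartzMap.fourierInv_coe (conjS ψ)
  have hFh : 𝓕 ⇑h = ⇑(conjS ψ) := by
    rw [hcoe]
    exact (conjS ψ).continuous.fourier_fourierInv_eq (conjS ψ).integrable
      ((fourierTransformCLM ℝ (conjS ψ)).integrable)
  have key : ∀ ω : 𝓔, (starRingEnd ℂ) (𝓕 ⇑ψ ω) = h ω := by
    intro ω
    have : h ω = 𝓕⁻ ⇑(conjS ψ) ω := by rw [hcoe]
    rw [this, Real.fourier_eq', Real.fourierInv_eq', ← integral_conj]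
    congr 1
    funext v
    rw [smul_eq_mul, smul_eq_mul, conjS_apply, map_mul, ← Complex.exp_conj]
    congr 2
    rw [map_mul, Complex.conj_I, Complex.conj_ofReal]
    push_cast
    ring
  calc ∫ ω : 𝓔, 𝓕 ⇑φ ω * (starRingEnd ℂ) (𝓕 ⇑ψ ω)
      = ∫ ω : 𝓔, (𝓕 ⇑φ ω) • h ω := by
        congr 1; funext ω; rw [key ω, smul_eq_mul]
  _ = ∫ x : 𝓔, φ x • (𝓕 ⇑h x) := by
        have := VectorFourier.integral_fourierIntegral_smul_eq_flip
          (L := innerₗ 𝓔) (μ := (volume : Measure 𝓔)) (ν := (volume : Measure 𝓔))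
          Real.continuous_fourierChar continuous_inner
          φ.integrable h.integrable
        simp [flip_innerₗ] at this; exact this
  _ = ∫ x : 𝓔, φ x * (starRingEnd ℂ) (ψ x) := by
        congr 1; funext x
        rw [hFh, conjS_apply, smul_eq_mul]

/-- The inner slice of the Wigner transform, as a Schwartz function. -/
def Phi (f g : 𝓢(𝓔, ℂ)) (x : 𝓔) : 𝓢(𝓔, ℂ) :=
  SchwartzMap.bilinLeftCLM mulConjCLM
    (schwartz_temperate (shift g x (-(1/2)) (by norm_num)))
    (shift f x (1/2) (by norm_num))

lemma Phi_apply (f g : 𝓢(𝓔, ℂ)) (x y : 𝓔) :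
    Phi f g x y = f (x + (1/2 : ℝ) • y) * (starRingEnd ℂ) (g (x - (1/2 : ℝ) • y)) := by
  have h : x + (-(1/2) : ℝ) • y = x - (1/2 : ℝ) • y := by
    rw [neg_smul, ← sub_eq_add_neg]
  show f (x + (1/2 : ℝ) • y) * (starRingEnd ℂ) (g (x + (-(1/2) : ℝ) • y)) = _
  rw [h]

lemma W_eq (f g : 𝓢(𝓔, ℂ)) (x : 𝓔) : W d ⇑f ⇑g x = 𝓕 ⇑(Phi f g x) := by
  funext ω
  rw [Real.fourier_eq']
  show (∫ y : 𝓔, Complex.exp (-2 * (π : ℂ) * Complex.I * ((inner ℝ ω y : ℝ) : ℂ)) *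
      f (x + (1/2 : ℝ) • y) * (starRingEnd ℂ) (g (x - (1/2 : ℝ) • y))) = _
  congr 1
  funext y
  rw [smul_eq_mul, Phi_apply, real_inner_comm y ω, mul_assoc]
  congr 2
  push_cast
  ring

lemma integral_conv (F G : 𝓢(𝓔, ℂ)) (x : 𝓔) :
    (∫ y : 𝓔, F (x + (1/2 : ℝ) • y) * G (x - (1/2 : ℝ) • y))
      = ((2 : ℝ)^d) • ((⇑F ⋆[ContinuousLinearMap.mul ℝ ℂ] ⇑G) ((2 : ℝ) • x)) := by
  have h1 : (∫ y : 𝓔, F (x + (1/2 : ℝ) • y) * G (x - (1/2 : ℝ) • y))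
      = ∫ y : 𝓔, (fun z : 𝓔 => F (x + z) * G (x - z)) ((1/2 : ℝ) • y) := rfl
  rw [h1, MeasureTheory.Measure.integral_comp_smul volume
      (fun z : 𝓔 => F (x + z) * G (x - z)) (1/2 : ℝ)]
  have h2 : |(((1/2 : ℝ)) ^ (Module.finrank ℝ 𝓔))⁻¹| = (2 : ℝ)^d := by
    rw [finrank_euclideanSpace_fin, abs_of_pos (by positivity), one_div, inv_pow, inv_inv]
  rw [h2]
  congr 1
  have h3 : (∫ z : 𝓔, F (x + z) * G (x - z))
      = ∫ z : 𝓔, (fun t : 𝓔 => F t * G ((2 : ℝ) • x - t)) (z + x) := by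
    congr 1
    funext z
    have : (2 : ℝ) • x - (z + x) = x - z := by
      rw [two_smul]; abel
    simp only [this]
    rw [add_comm z x]
  rw [h3, MeasureTheory.integral_add_right_eq_self
      (fun t : 𝓔 => F t * G ((2 : ℝ) • x - t)) x]
  rfl

/-- Moyal's formula for Schwartz functions. -/
lemma moyal (f₁ f₂ g₁ g₂ : 𝓢(𝓔, ℂ)) :
    (∫ x : 𝓔, ∫ ω : 𝓔, W d ⇑f₁ ⇑g₁ x ω * (starRingEnd ℂ) (W d ⇑f₂ ⇑g₂ x ω))
      = (∫ y : 𝓔, f₁ y * (starRingEnd ℂ) (f₂ y)) *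
          (starRingEnd ℂ) (∫ y : 𝓔, g₁ y * (starRingEnd ℂ) (g₂ y)) := by
  set F : 𝓢(𝓔, ℂ) := mulConjS f₁ f₂ with hF
  set G : 𝓢(𝓔, ℂ) := conjMulS g₁ g₂ with hG
  have main : (∫ x : 𝓔, ∫ ω : 𝓔, W d ⇑f₁ ⇑g₁ x ω * (starRingEnd ℂ) (W d ⇑f₂ ⇑g₂ x ω))
      = (∫ y : 𝓔, F y) * (∫ y : 𝓔, G y) := by
    calc (∫ x : 𝓔, ∫ ω : 𝓔, W d ⇑f₁ ⇑g₁ x ω * (starRingEnd ℂ) (W d ⇑f₂ ⇑g₂ x ω))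
        = ∫ x : 𝓔, ∫ ω : 𝓔, 𝓕 ⇑(Phi f₁ g₁ x) ω * (starRingEnd ℂ) (𝓕 ⇑(Phi f₂ g₂ x) ω) := by
          congr 1; funext x; rw [W_eq f₁ g₁ x, W_eq f₂ g₂ x]
    _ = ∫ x : 𝓔, ∫ y : 𝓔, Phi f₁ g₁ x y * (starRingEnd ℂ) (Phi f₂ g₂ x y) := by
          congr 1; funext x; exact parseval _ _
    _ = ∫ x : 𝓔, ∫ y : 𝓔, F (x + (1/2 : ℝ) • y) * G (x - (1/2 : ℝ) • y) := by
          congr 1; funext x; congr 1; funext y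
          simp only [Phi_apply, hF, hG, mulConjS_apply, conjMulS_apply,
            map_mul, Complex.conj_conj]
          ring
    _ = ∫ x : 𝓔, ((2 : ℝ)^d) • ((⇑F ⋆[ContinuousLinearMap.mul ℝ ℂ] ⇑G) ((2 : ℝ) • x)) := by
          congr 1; funext x; exact integral_conv F G x
    _ = ((2 : ℝ)^d) • ∫ x : 𝓔, (⇑F ⋆[ContinuousLinearMap.mul ℝ ℂ] ⇑G) ((2 : ℝ) • x) :=
          integral_smul _ _
    _ = ((2 : ℝ)^d) • ((((2 : ℝ) ^ d)⁻¹ : ℝ) •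
          ∫ x : 𝓔, (⇑F ⋆[ContinuousLinearMap.mul ℝ ℂ] ⇑G) x) := by
          rw [MeasureTheory.Measure.integral_comp_smul volume
            (⇑F ⋆[ContinuousLinearMap.mul ℝ ℂ] ⇑G) (2 : ℝ),
            finrank_euclideanSpace_fin,
            abs_of_pos (show (0:ℝ) < ((2:ℝ)^d)⁻¹ by positivity)]
    _ = ∫ x : 𝓔, (⇑F ⋆[ContinuousLinearMap.mul ℝ ℂ] ⇑G) x := by
          rw [smul_smul, mul_inv_cancel₀ (by positivity), one_smul]
    _ = (∫ y : 𝓔, F y) * (∫ y : 𝓔, G y) :=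
          MeasureTheory.integral_convolution _ F.integrable G.integrable
  rw [main]
  congr 1
  rw [← integral_conj]
  congr 1
  funext y
  rw [map_mul, Complex.conj_conj, hG, conjMulS_apply]

end

end Moyal

theorem stmt9 (d : ℕ)
    (f₁ f₂ g₁ g₂ : SchwartzMap (EuclideanSpace ℝ (Fin d)) ℂ) :
    ((∫ x : EuclideanSpace ℝ (Fin d), ∫ ω : EuclideanSpace ℝ (Fin d),
        W d ⇑f₁ ⇑g₁ x ω * (starRingEnd ℂ) (W d ⇑f₂ ⇑g₂ x ω))
      = (∫ y : EuclideanSpace ℝ (Fin d), f₁ y * (starRingEnd ℂ) (f₂ y)) *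
          (starRingEnd ℂ) (∫ y : EuclideanSpace ℝ (Fin d), g₁ y * (starRingEnd ℂ) (g₂ y))) ∧
    (∀ f : SchwartzMap (EuclideanSpace ℝ (Fin d)) ℂ,
      (∫ x : EuclideanSpace ℝ (Fin d), ∫ ω : EuclideanSpace ℝ (Fin d), ‖W d ⇑f ⇑f x ω‖ ^ 2)
        = (∫ y : EuclideanSpace ℝ (Fin d), ‖f y‖ ^ 2) ^ 2) := by
  constructor
  · exact Moyal.moyal f₁ f₂ g₁ g₂
  · intro f
    have h := Moyal.moyal f f f f
    have hsq : ∀ z : ℂ, z * (starRingEnd ℂ) z = ((‖z‖ ^ 2 : ℝ) : ℂ) := fun z => by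
      rw [Complex.mul_conj, Complex.normSq_eq_norm_sq]
    have hf2 : (∫ y : EuclideanSpace ℝ (Fin d), f y * (starRingEnd ℂ) (f y))
        = ((∫ y : EuclideanSpace ℝ (Fin d), ‖f y‖ ^ 2 : ℝ) : ℂ) := by
      have : (∫ y : EuclideanSpace ℝ (Fin d), f y * (starRingEnd ℂ) (f y))
          = ∫ y : EuclideanSpace ℝ (Fin d), ((‖f y‖ ^ 2 : ℝ) : ℂ) := by
        congr 1; funext y; exact hsq _
      rw [this]
      exact integral_ofReal
    have hL : ((∫ x : EuclideanSpace ℝ (Fin d), ∫ ω : EuclideanSpace ℝ (Fin d),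
        ‖W d ⇑f ⇑f x ω‖ ^ 2 : ℝ) : ℂ)
        = ∫ x : EuclideanSpace ℝ (Fin d), ∫ ω : EuclideanSpace ℝ (Fin d),
            W d ⇑f ⇑f x ω * (starRingEnd ℂ) (W d ⇑f ⇑f x ω) := by
      have h1 : ∀ x : EuclideanSpace ℝ (Fin d),
          (∫ ω : EuclideanSpace ℝ (Fin d),
            W d ⇑f ⇑f x ω * (starRingEnd ℂ) (W d ⇑f ⇑f x ω))
          = ((∫ ω : EuclideanSpace ℝ (Fin d), ‖W d ⇑f ⇑f x ω‖ ^ 2 : ℝ) : ℂ) := by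
        intro x
        have : (∫ ω : EuclideanSpace ℝ (Fin d),
            W d ⇑f ⇑f x ω * (starRingEnd ℂ) (W d ⇑f ⇑f x ω))
            = ∫ ω : EuclideanSpace ℝ (Fin d), ((‖W d ⇑f ⇑f x ω‖ ^ 2 : ℝ) : ℂ) := by
          congr 1; funext ω; exact hsq _
        rw [this]; exact integral_ofReal
      have h2 : (∫ x : EuclideanSpace ℝ (Fin d), ∫ ω : EuclideanSpace ℝ (Fin d),
          W d ⇑f ⇑f x ω * (starRingEnd ℂ) (W d ⇑f ⇑f x ω))
          = ∫ x : EuclideanSpace ℝ (Fin d),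
            ((∫ ω : EuclideanSpace ℝ (Fin d), ‖W d ⇑f ⇑f x ω‖ ^ 2 : ℝ) : ℂ) := by
        congr 1; funext x; exact h1 x
      rw [h2]; exact integral_ofReal.symm
    apply Complex.ofReal_injective
    rw [hL, h, hf2, Complex.conj_ofReal, ← Complex.ofReal_mul, ← sq]
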